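/- Let n ≥ 1, let F be a norm on ℝⁿ with open unit ball B_F = {v : F(v) < 1}, let B be the open Euclidean unit ball, let λ be Lebesgue measure, and set M = sup{F(v) : ‖v‖ = 1}. Then the eccentricity factor N(F) := Mⁿ · λ(B_F)/λ(B) satisfies N(F) ≥ 1, and N(F) = 1 if and only if F is a positive scalar multiple of the Euclidean norm, namely F(v) = M·‖v‖ for all v. -/

import Mathlib

open MeasureTheory

set_option maxHeartbeats 1000000 in
/-- Pointwise lower bound on the eccentricity factor: for a norm `F` on `ℝⁿ`, `n ≥ 1`,
with `M = sup {F v : ‖v‖ = 1}`, the eccentricity factor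
`N(F) = Mⁿ · λ(B_F)/λ(B)` satisfies `N(F) ≥ 1`, with equality if and only if
`F` is the scalar multiple `F(v) = M‖v‖` of the Euclidean norm. -/
theorem eccentricity_factor_ge_one {n : ℕ} (hn : 1 ≤ n)
    (F : EuclideanSpace ℝ (Fin n) → ℝ)
    (hF0 : ∀ v, F v = 0 ↔ v = 0)
    (hFhom : ∀ (t : ℝ) (v), F (t • v) = |t| * F v)
    (hFtri : ∀ v w, F (v + w) ≤ F v + F w)
    (M NF : ℝ)
    (hM : M = sSup (F '' {v | ‖v‖ = 1}))
    (hNF : NF = M ^ n * (volume {v | F v < 1}).toReal /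
      (volume (Metric.ball (0 : EuclideanSpace ℝ (Fin n)) 1)).toReal) :
    1 ≤ NF ∧ (NF = 1 ↔ ∀ v, F v = M * ‖v‖) := by
  classical
  have hF0' : F 0 = 0 := (hF0 0).mpr rfl
  have hFneg : ∀ v, F (-v) = F v := by
    intro v
    rw [← neg_one_smul ℝ v, hFhom]
    simp
  have hFnonneg : ∀ v, 0 ≤ F v := by
    intro v
    have h := hFtri v (-v)
    rw [add_neg_cancel, hF0', hFneg] at h
    linarith
  -- coordinate bound
  have hcoord : ∀ (v : EuclideanSpace ℝ (Fin n)) (i : Fin n), |v i| ≤ ‖v‖ := by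
    intro v i
    rw [EuclideanSpace.norm_eq]
    have h1 : |v i| = Real.sqrt (‖v i‖ ^ 2) := by
      rw [Real.sqrt_sq_eq_abs, abs_norm, Real.norm_eq_abs]
    rw [h1]
    apply Real.sqrt_le_sqrt
    exact Finset.single_le_sum (f := fun j => ‖v j‖ ^ 2)
      (fun j _ => sq_nonneg _) (Finset.mem_univ i)
  -- F is Lipschitz, hence continuous
  set C : ℝ := ∑ i : Fin n, F (EuclideanSpace.single i 1) with hC
  have hFle : ∀ v : EuclideanSpace ℝ (Fin n), F v ≤ C * ‖v‖ := by
    intro v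
    have hv : (∑ i : Fin n, v i • EuclideanSpace.single i (1 : ℝ)) = v := by
      have := (EuclideanSpace.basisFun (Fin n) ℝ).sum_repr v
      simpa [EuclideanSpace.basisFun_apply, EuclideanSpace.basisFun_repr] using this
    calc F v = F (∑ i : Fin n, v i • EuclideanSpace.single i (1 : ℝ)) := by rw [hv]
      _ ≤ ∑ i : Fin n, F (v i • EuclideanSpace.single i (1 : ℝ)) :=
          Finset.le_sum_of_subadditive F hF0'.le hFtri _ _
      _ = ∑ i : Fin n, |v i| * F (EuclideanSpace.single i (1 : ℝ)) := by
          simp [hFhom]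
      _ ≤ ∑ i : Fin n, ‖v‖ * F (EuclideanSpace.single i (1 : ℝ)) := by
          apply Finset.sum_le_sum
          intro i _
          exact mul_le_mul_of_nonneg_right (hcoord v i) (hFnonneg _)
      _ = C * ‖v‖ := by rw [hC, Finset.sum_mul]; exact Finset.sum_congr rfl fun i _ => mul_comm _ _
  have hlip : ∀ x y : EuclideanSpace ℝ (Fin n), |F x - F y| ≤ C * ‖x - y‖ := by
    intro x y
    rw [abs_sub_le_iff]
    constructor
    · have h := hFtri y (x - y)
      rw [add_sub_cancel] at h
      have := hFle (x - y)
      linarith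
    · have h := hFtri x (y - x)
      rw [add_sub_cancel] at h
      have h2 := hFle (y - x)
      have h3 : ‖y - x‖ = ‖x - y‖ := norm_sub_rev y x
      rw [h3] at h2
      linarith
  have hcont : Continuous F := by
    have : LipschitzWith (Real.toNNReal C) F := by
      apply LipschitzWith.of_dist_le_mul
      intro x y
      rw [Real.dist_eq, dist_eq_norm]
      calc |F x - F y| ≤ C * ‖x - y‖ := hlip x y
        _ ≤ Real.toNNReal C * ‖x - y‖ :=
            mul_le_mul_of_nonneg_right (Real.le_coe_toNNReal C) (norm_nonneg _)
    exact this.continuous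
  -- the unit sphere
  have hsphere : {v : EuclideanSpace ℝ (Fin n) | ‖v‖ = 1} = Metric.sphere (0 : EuclideanSpace ℝ (Fin n)) 1 := by
    ext v; simp [mem_sphere_zero_iff_norm]
  have hKcompact : IsCompact (F '' {v : EuclideanSpace ℝ (Fin n) | ‖v‖ = 1}) := by
    rw [hsphere]
    exact (isCompact_sphere (0 : EuclideanSpace ℝ (Fin n)) 1).image hcont
  have hu0 : (EuclideanSpace.single (⟨0, hn⟩ : Fin n) (1 : ℝ) : EuclideanSpace ℝ (Fin n)) ∈ {v : EuclideanSpace ℝ (Fin n) | ‖v‖ = 1} := by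
    simp [EuclideanSpace.norm_single]
  have hKne : (F '' {v : EuclideanSpace ℝ (Fin n) | ‖v‖ = 1}).Nonempty := ⟨_, Set.mem_image_of_mem F hu0⟩
  have hMmem : M ∈ F '' {v : EuclideanSpace ℝ (Fin n) | ‖v‖ = 1} := hM ▸ hKcompact.sSup_mem hKne
  have hMub : ∀ v : EuclideanSpace ℝ (Fin n), ‖v‖ = 1 → F v ≤ M :=
    fun v hv => hM ▸ le_csSup hKcompact.bddAbove (Set.mem_image_of_mem F hv)
  have hMpos : 0 < M := by
    obtain ⟨u, hu, hFu⟩ := hMmem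
    simp only [Set.mem_setOf_eq] at hu
    have hune : u ≠ 0 := by
      intro h
      rw [h, norm_zero] at hu
      exact one_ne_zero hu.symm
    have : F u ≠ 0 := fun h => hune ((hF0 u).mp h)
    rw [← hFu]
    exact lt_of_le_of_ne (hFnonneg u) (Ne.symm this)
  -- F v ≤ M ‖v‖
  have hFleM : ∀ v : EuclideanSpace ℝ (Fin n), F v ≤ M * ‖v‖ := by
    intro v
    rcases eq_or_ne v 0 with rfl | hv
    · simp [hF0']
    · have hnv : (0 : ℝ) < ‖v‖ := norm_pos_iff.mpr hv
      have hu : ‖(‖v‖⁻¹ • v : EuclideanSpace ℝ (Fin n))‖ = 1 := by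
        rw [norm_smul, norm_inv, norm_norm, inv_mul_cancel₀ hnv.ne']
      have h1 : F v = ‖v‖ * F (‖v‖⁻¹ • v) := by
        rw [hFhom, abs_of_pos (inv_pos.mpr hnv)]
        field_simp
      rw [h1]
      have := hMub _ hu
      calc ‖v‖ * F (‖v‖⁻¹ • v) ≤ ‖v‖ * M :=
            mul_le_mul_of_nonneg_left this hnv.le
        _ = M * ‖v‖ := mul_comm _ _
  -- lower bound m ‖v‖ ≤ F v
  set m : ℝ := sInf (F '' {v : EuclideanSpace ℝ (Fin n) | ‖v‖ = 1}) with hm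
  have hmmem : m ∈ F '' {v : EuclideanSpace ℝ (Fin n) | ‖v‖ = 1} := hKcompact.sInf_mem hKne
  have hmlb : ∀ v : EuclideanSpace ℝ (Fin n), ‖v‖ = 1 → m ≤ F v :=
    fun v hv => csInf_le hKcompact.bddBelow (Set.mem_image_of_mem F hv)
  have hmpos : 0 < m := by
    obtain ⟨u, hu, hFu⟩ := hmmem
    simp only [Set.mem_setOf_eq] at hu
    have hune : u ≠ 0 := by
      intro h
      rw [h, norm_zero] at hu
      exact one_ne_zero hu.symm
    have : F u ≠ 0 := fun h => hune ((hF0 u).mp h)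
    rw [← hFu]
    exact lt_of_le_of_ne (hFnonneg u) (Ne.symm this)
  have hFgem : ∀ v : EuclideanSpace ℝ (Fin n), m * ‖v‖ ≤ F v := by
    intro v
    rcases eq_or_ne v 0 with rfl | hv
    · simp [hF0']
    · have hnv : (0 : ℝ) < ‖v‖ := norm_pos_iff.mpr hv
      have hu : ‖(‖v‖⁻¹ • v : EuclideanSpace ℝ (Fin n))‖ = 1 := by
        rw [norm_smul, norm_inv, norm_norm, inv_mul_cancel₀ hnv.ne']
      have h1 : F v = ‖v‖ * F (‖v‖⁻¹ • v) := by
        rw [hFhom, abs_of_pos (inv_pos.mpr hnv)]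
        field_simp
      rw [h1, mul_comm m ‖v‖]
      exact mul_le_mul_of_nonneg_left (hmlb _ hu) hnv.le
  -- the unit ball of F
  set S : Set (EuclideanSpace ℝ (Fin n)) := {v | F v < 1} with hS
  have hSopen : IsOpen S := isOpen_lt hcont continuous_const
  have hball_sub : Metric.ball (0 : EuclideanSpace ℝ (Fin n)) M⁻¹ ⊆ S := by
    intro v hv
    rw [Metric.mem_ball, dist_zero_right] at hv
    have : F v ≤ M * ‖v‖ := hFleM v
    have : M * ‖v‖ < M * M⁻¹ := by
      exact mul_lt_mul_of_pos_left hv hMpos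
    rw [mul_inv_cancel₀ hMpos.ne'] at this
    exact lt_of_le_of_lt (hFleM v) this
  have hS_sub : S ⊆ Metric.ball (0 : EuclideanSpace ℝ (Fin n)) (m⁻¹ + 1) := by
    intro v hv
    rw [Metric.mem_ball, dist_zero_right]
    have h1 : m * ‖v‖ ≤ F v := hFgem v
    have h2 : F v < 1 := hv
    have : ‖v‖ < m⁻¹ := by
      rw [show m⁻¹ = 1 / m by rw [one_div], lt_div_iff₀ hmpos]
      nlinarith
    linarith
  -- volume facts
  have hfinrank : Module.finrank ℝ (EuclideanSpace ℝ (Fin n)) = n := finrank_euclideanSpace_fin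
  haveI : Nontrivial (EuclideanSpace ℝ (Fin n)) := by
    apply Module.nontrivial_of_finrank_pos (R := ℝ)
    rw [hfinrank]; omega
  set b := volume (Metric.ball (0 : EuclideanSpace ℝ (Fin n)) 1) with hb
  have hbpos : 0 < b := Metric.measure_ball_pos volume 0 one_pos
  have hbtop : b < ⊤ := measure_ball_lt_top
  have hbr : ∀ (x : EuclideanSpace ℝ (Fin n)) (r : ℝ), 0 < r →
      volume (Metric.ball x r) = ENNReal.ofReal (r ^ n) * b := by
    intro x r hr
    rw [Measure.addHaar_ball_of_pos volume x hr, hfinrank]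
  have hStop : volume S < ⊤ :=
    lt_of_le_of_lt (measure_mono hS_sub) measure_ball_lt_top
  set a : ℝ := (volume S).toReal with ha
  set br : ℝ := b.toReal with hbr'
  have hbrpos : 0 < br := ENNReal.toReal_pos hbpos.ne' hbtop.ne
  have hkey : M⁻¹ ^ n * br ≤ a := by
    have h1 : volume (Metric.ball (0 : EuclideanSpace ℝ (Fin n)) M⁻¹) ≤ volume S := measure_mono hball_sub
    rw [hbr (0 : EuclideanSpace ℝ (Fin n)) M⁻¹ (inv_pos.mpr hMpos)] at h1
    have h2 := ENNReal.toReal_mono hStop.ne h1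
    rwa [ENNReal.toReal_mul, ENNReal.toReal_ofReal (by positivity)] at h2
  have hMn : (0 : ℝ) < M ^ n := pow_pos hMpos n
  have hNFge : 1 ≤ NF := by
    rw [hNF]
    rw [le_div_iff₀ hbrpos]
    calc (1 : ℝ) * br = M ^ n * (M⁻¹ ^ n * br) := by
          rw [← mul_assoc, ← mul_pow, mul_inv_cancel₀ hMpos.ne', one_pow]
      _ ≤ M ^ n * a := by
          exact mul_le_mul_of_nonneg_left hkey hMn.le
  refine ⟨hNFge, ?_, ?_⟩
  · -- NF = 1 → F v = M ‖v‖
    intro hNF1 v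
    by_contra hne
    have hlt : F v < M * ‖v‖ := lt_of_le_of_ne (hFleM v) hne
    have hvne : v ≠ 0 := by
      intro h
      apply hne
      rw [h, hF0', norm_zero, mul_zero]
    have hnv : (0 : ℝ) < ‖v‖ := norm_pos_iff.mpr hvne
    -- the point w on the sphere of radius M⁻¹ with F w < 1
    set w : EuclideanSpace ℝ (Fin n) := (‖v‖⁻¹ * M⁻¹) • v with hw
    have hnw : ‖w‖ = M⁻¹ := by
      rw [hw, norm_smul, Real.norm_eq_abs,
        abs_of_pos (by positivity : (0:ℝ) < ‖v‖⁻¹ * M⁻¹)]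
      field_simp
    have hFw : F w < 1 := by
      rw [hw, hFhom, abs_of_pos (by positivity : (0:ℝ) < ‖v‖⁻¹ * M⁻¹)]
      calc ‖v‖⁻¹ * M⁻¹ * F v < ‖v‖⁻¹ * M⁻¹ * (M * ‖v‖) := by
            apply mul_lt_mul_of_pos_left hlt (by positivity)
        _ = 1 := by field_simp
    obtain ⟨ε, hε, hball⟩ := Metric.isOpen_iff.mp hSopen w hFw
    -- choose a nearby point u with ‖u‖ > M⁻¹
    set δ : ℝ := min (ε * M / 2) 1 with hδ
    have hδpos : 0 < δ := lt_min (by positivity) one_pos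
    set u : EuclideanSpace ℝ (Fin n) := (1 + δ) • w with hu
    have huw : ‖u - w‖ = δ * M⁻¹ := by
      have : u - w = δ • w := by rw [hu]; module
      rw [this, norm_smul, Real.norm_eq_abs, abs_of_pos hδpos, hnw]
    have huwε : ‖u - w‖ < ε := by
      rw [huw]
      have h1 : δ ≤ ε * M / 2 := min_le_left _ _
      have h2 : δ * M⁻¹ ≤ ε * M / 2 * M⁻¹ :=
        mul_le_mul_of_nonneg_right h1 (by positivity)
      have h3 : ε * M / 2 * M⁻¹ = ε / 2 := by field_simp
      rw [h3] at h2
      linarith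
    have hnu : ‖u‖ = (1 + δ) * M⁻¹ := by
      rw [hu, norm_smul, Real.norm_eq_abs, abs_of_pos (by linarith), hnw]
    set r : ℝ := min (ε - ‖u - w‖) (‖u‖ - M⁻¹) with hr
    have hrpos : 0 < r := by
      apply lt_min
      · linarith
      · rw [hnu]
        have : (0:ℝ) < δ * M⁻¹ := by positivity
        nlinarith
    have hball_u : Metric.ball u r ⊆ S := by
      intro x hx
      apply hball
      rw [Metric.mem_ball] at *
      calc dist x w ≤ dist x u + dist u w := dist_triangle _ _ _
        _ < r + ‖u - w‖ := by
            rw [dist_eq_norm u w]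
            exact add_lt_add_left hx _
        _ ≤ (ε - ‖u - w‖) + ‖u - w‖ := by
            exact add_le_add_left (min_le_left _ _) _
        _ = ε := by ring
    have hdisj : Disjoint (Metric.ball (0 : EuclideanSpace ℝ (Fin n)) M⁻¹) (Metric.ball u r) := by
      rw [Set.disjoint_left]
      intro x hx1 hx2
      rw [Metric.mem_ball, dist_zero_right] at hx1
      rw [Metric.mem_ball, dist_eq_norm] at hx2
      have h1 : ‖u‖ - ‖x‖ ≤ ‖x - u‖ := by
        have := norm_sub_norm_le u x
        rw [norm_sub_rev] at this
        linarith [this]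
      have h2 : r ≤ ‖u‖ - M⁻¹ := min_le_right _ _
      linarith
    -- extra volume
    have hstrict : M⁻¹ ^ n * br + r ^ n * br ≤ a := by
      have hunion : Metric.ball (0 : EuclideanSpace ℝ (Fin n)) M⁻¹ ∪ Metric.ball u r ⊆ S :=
        Set.union_subset hball_sub hball_u
      have h1 : volume (Metric.ball (0 : EuclideanSpace ℝ (Fin n)) M⁻¹ ∪ Metric.ball u r)
          = volume (Metric.ball (0 : EuclideanSpace ℝ (Fin n)) M⁻¹) + volume (Metric.ball u r) :=
        measure_union hdisj measurableSet_ball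
      have h2 := measure_mono (μ := (volume : Measure (EuclideanSpace ℝ (Fin n)))) hunion
      rw [h1, hbr (0 : EuclideanSpace ℝ (Fin n)) M⁻¹ (inv_pos.mpr hMpos), hbr u r hrpos] at h2
      have h3 := ENNReal.toReal_mono hStop.ne h2
      rw [ENNReal.toReal_add (ENNReal.mul_ne_top ENNReal.ofReal_ne_top hbtop.ne)
        (ENNReal.mul_ne_top ENNReal.ofReal_ne_top hbtop.ne),
        ENNReal.toReal_mul, ENNReal.toReal_mul,
        ENNReal.toReal_ofReal (by positivity), ENNReal.toReal_ofReal (by positivity)] at h3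
      exact h3
    have : 1 < NF := by
      rw [hNF, lt_div_iff₀ hbrpos]
      calc (1 : ℝ) * br = M ^ n * (M⁻¹ ^ n * br) := by
            rw [← mul_assoc, ← mul_pow, mul_inv_cancel₀ hMpos.ne', one_pow]
        _ < M ^ n * (M⁻¹ ^ n * br + r ^ n * br) := by
            apply mul_lt_mul_of_pos_left _ hMn
            nlinarith [pow_pos hrpos n]
        _ ≤ M ^ n * a := mul_le_mul_of_nonneg_left hstrict hMn.le
    linarith [hNF1 ▸ this]
  · -- F v = M ‖v‖ → NF = 1
    intro heq
    have hSeq : S = Metric.ball (0 : EuclideanSpace ℝ (Fin n)) M⁻¹ := by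
      ext v
      rw [Metric.mem_ball, dist_zero_right]
      simp only [hS, Set.mem_setOf_eq, heq v]
      rw [mul_comm, ← lt_div_iff₀ hMpos, one_div]
    have : a = M⁻¹ ^ n * br := by
      rw [ha, hSeq, hbr (0 : EuclideanSpace ℝ (Fin n)) M⁻¹ (inv_pos.mpr hMpos), ENNReal.toReal_mul,
        ENNReal.toReal_ofReal (by positivity)]
    rw [hNF, this]
    rw [div_eq_one_iff_eq hbrpos.ne']
    rw [← mul_assoc, ← mul_pow, mul_inv_cancel₀ hMpos.ne', one_pow, one_mul]
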